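/- arXiv:2512.01112 — 3 statements merged into one kernel-verified Lean document; each statement's English description precedes it below -/
import Mathlib

section
/- Let n ≥ 1, let w₁,…,wₙ > 0 be winner endowments, let caps β₁,…,βₙ ∈ (0,1], and let φ : ℝ → ℝ be continuous, strictly convex, and increasing on [0,1]. Let the budget B satisfy 0 < B < Σᵢ wᵢ·βᵢ. Then there exists a water level η ≥ 0 such that the capped pro-rata haircut vector h*ᵢ = min(η, βᵢ) satisfies Σᵢ wᵢ·h*ᵢ = B, and h* is the unique minimizer of the weighted total disutility Σᵢ wᵢ·φ(hᵢ) over all haircut vectors h with 0 ≤ hᵢ ≤ βᵢ for every i and Σᵢ wᵢ·hᵢ = B. -/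
/-- Strict subgradient inequality for a strictly convex function on `[0,1]`
at an interior point `η`, with `L` the sup of left secant slopes. -/
lemma strict_subgrad (φ : ℝ → ℝ) (hφconv : StrictConvexOn ℝ (Set.Icc 0 1) φ)
    (η : ℝ) (hη0 : 0 < η) (hη1 : η < 1) :
    ∃ L : ℝ, ∀ x ∈ Set.Icc (0:ℝ) 1, x ≠ η → φ η + L * (x - η) < φ x := by
  have hηm : η ∈ Set.Icc (0:ℝ) 1 := ⟨hη0.le, hη1.le⟩
  set S : Set ℝ := (fun x => (φ x - φ η) / (x - η)) '' Set.Ico 0 η with hS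
  have hne : S.Nonempty := ⟨(φ 0 - φ η) / (0 - η), ⟨0, ⟨le_refl _, hη0⟩, rfl⟩⟩
  -- every left slope is < slope to any y > η
  have key : ∀ x ∈ Set.Ico (0:ℝ) η, ∀ y ∈ Set.Ioc η 1,
      (φ x - φ η) / (x - η) < (φ y - φ η) / (y - η) := by
    intro x hx y hy
    exact hφconv.secant_strict_mono hηm ⟨hx.1, (hx.2.trans hη1).le⟩ ⟨(hη0.trans hy.1).le, hy.2⟩
      (ne_of_lt hx.2) (ne_of_gt hy.1) (hx.2.trans hy.1)
  have hbdd : BddAbove S := by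
    refine ⟨(φ 1 - φ η) / (1 - η), ?_⟩
    rintro _ ⟨x, hx, rfl⟩
    exact (key x hx 1 ⟨hη1, le_refl _⟩).le
  set L := sSup S with hL
  refine ⟨L, ?_⟩
  intro x hx hxne
  rcases lt_or_gt_of_ne hxne with hlt | hgt
  · -- x < η : slope x η < slope m η ≤ L, with m midpoint
    set m := (x + η) / 2 with hm
    have hxm : x < m := by simp only [hm]; linarith
    have hmη : m < η := by simp only [hm]; linarith
    have h1 : (φ x - φ η) / (x - η) < (φ m - φ η) / (m - η) :=
      hφconv.secant_strict_mono hηm hx ⟨by linarith [hx.1], by linarith⟩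
        (ne_of_lt hlt) (ne_of_lt hmη) hxm
    have h2 : (φ m - φ η) / (m - η) ≤ L :=
      le_csSup hbdd ⟨m, ⟨by linarith [hx.1], hmη⟩, rfl⟩
    have h3 : (φ x - φ η) / (x - η) < L := lt_of_lt_of_le h1 h2
    rw [div_lt_iff_of_neg (by linarith : x - η < 0)] at h3
    linarith
  · -- x > η : L ≤ slope η m < slope η x
    set m := (x + η) / 2 with hm
    have hηm' : η < m := by simp only [hm]; linarith
    have hmx : m < x := by simp only [hm]; linarith
    have hmmem : m ∈ Set.Ioc η 1 := ⟨hηm', by linarith [hx.2]⟩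
    have h1 : L ≤ (φ m - φ η) / (m - η) := by
      apply csSup_le hne
      rintro _ ⟨z, hz, rfl⟩
      exact (key z hz m hmmem).le
    have h2 : (φ m - φ η) / (m - η) < (φ x - φ η) / (x - η) :=
      hφconv.secant_strict_mono hηm ⟨(hη0.trans hηm').le, hmmem.2⟩ hx
        (ne_of_gt hηm') (ne_of_gt hgt) hmx
    have h3 : L < (φ x - φ η) / (x - η) := lt_of_le_of_lt h1 h2
    rw [lt_div_iff₀ (by linarith : 0 < x - η)] at h3
    linarith

/-- **Convex optimality of the capped pro-rata rule.**
For positive endowments `w`, caps `β ∈ (0,1]`, a continuous, strictly convex,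
strictly increasing disutility `φ` on `[0,1]`, and interior budget
`0 < B < ∑ w i * β i`, there is a water level `η ≥ 0` such that
`h* i = min η (β i)` is budget-balanced and is the unique minimizer of
`∑ w i * φ (h i)` over feasible budget-balanced haircut vectors. -/
theorem stmt_4 (n : ℕ) (hn : 0 < n) (w β : Fin n → ℝ)
    (hw : ∀ i, 0 < w i) (hβ : ∀ i, β i ∈ Set.Ioc (0 : ℝ) 1)
    (φ : ℝ → ℝ) (hφc : ContinuousOn φ (Set.Icc 0 1))
    (hφconv : StrictConvexOn ℝ (Set.Icc 0 1) φ)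
    (hφmono : StrictMonoOn φ (Set.Icc 0 1))
    (B : ℝ) (hB0 : 0 < B) (hBC : B < ∑ i, w i * β i) :
    ∃ η : ℝ, 0 ≤ η ∧
      (∑ i, w i * min η (β i)) = B ∧
      ∀ h : Fin n → ℝ, (∀ i, 0 ≤ h i ∧ h i ≤ β i) →
        (∑ i, w i * h i) = B →
        h ≠ (fun i => min η (β i)) →
        (∑ i, w i * φ (min η (β i))) < ∑ i, w i * φ (h i) := by
  -- the water-filling function
  set f : ℝ → ℝ := fun t => ∑ i, w i * min t (β i) with hf
  have hfc : Continuous f := by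
    apply continuous_finset_sum
    intro i _
    exact continuous_const.mul (continuous_id.min continuous_const)
  have hf0 : f 0 = 0 := by
    simp only [hf]
    apply Finset.sum_eq_zero
    intro i _
    rw [min_eq_left (hβ i).1.le, mul_zero]
  have hf1 : f 1 = ∑ i, w i * β i := by
    apply Finset.sum_congr rfl
    intro i _
    rw [min_eq_right (hβ i).2]
  -- IVT
  obtain ⟨η, hηmem, hηB⟩ : ∃ η ∈ Set.Icc (0:ℝ) 1, f η = B := by
    have := intermediate_value_Icc (by norm_num : (0:ℝ) ≤ 1) hfc.continuousOn
    have hB : B ∈ Set.Icc (f 0) (f 1) := by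
      rw [hf0, hf1]; exact ⟨hB0.le, hBC.le⟩
    obtain ⟨η, hη, hηB⟩ := this hB
    exact ⟨η, hη, hηB⟩
  have hη0 : 0 < η := by
    rcases eq_or_lt_of_le hηmem.1 with h | h
    · exfalso; rw [← h] at hηB; rw [← hηB] at hB0; rw [hf0] at hB0; exact lt_irrefl _ hB0
    · exact h
  have hη1 : η < 1 := by
    rcases eq_or_lt_of_le hηmem.2 with h | h
    · exfalso; rw [h] at hηB; rw [hf1] at hηB; rw [hηB] at hBC; exact lt_irrefl _ hBC
    · exact h
  obtain ⟨L, hL⟩ := strict_subgrad φ hφconv η hη0 hη1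
  refine ⟨η, hη0.le, hηB, ?_⟩
  intro h hfeas hbudget hne
  -- the optimizer
  set c : Fin n → ℝ := fun i => min η (β i) with hc
  have hcmem : ∀ i, c i ∈ Set.Icc (0:ℝ) 1 := fun i =>
    ⟨le_min hη0.le (hβ i).1.le, min_le_of_right_le (hβ i).2⟩
  have hhmem : ∀ i, h i ∈ Set.Icc (0:ℝ) 1 := fun i =>
    ⟨(hfeas i).1, (hfeas i).2.trans (hβ i).2⟩
  -- pointwise: φ (c i) + L * (h i - c i) ≤ φ (h i), strict when h i ≠ c i
  have hpoint : ∀ i, h i ≠ c i → φ (c i) + L * (h i - c i) < φ (h i) := by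
    intro i hine
    rcases le_or_gt η (β i) with hcase | hcase
    · -- c i = η
      have hci : c i = η := min_eq_left hcase
      rw [hci]
      exact hL (h i) (hhmem i) (by rw [hci] at hine; exact hine)
    · -- c i = β i < η, and h i ≤ β i so h i < c i
      have hci : c i = β i := min_eq_right hcase.le
      have hhi : h i < β i := lt_of_le_of_ne ((hfeas i).2) (by rw [hci] at hine; exact hine)
      -- slope (h i) (β i) < slope (h i) η ≤ ... use secant_strict_mono at a = h i
      have hβmem : (β i : ℝ) ∈ Set.Icc (0:ℝ) 1 := ⟨(hβ i).1.le, (hβ i).2⟩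
      have hηmem' : η ∈ Set.Icc (0:ℝ) 1 := ⟨hη0.le, hη1.le⟩
      have s1 : (φ (β i) - φ (h i)) / (β i - h i) < (φ η - φ (h i)) / (η - h i) :=
        hφconv.secant_strict_mono (hhmem i) hβmem hηmem'
          (ne_of_gt hhi) (ne_of_gt (hhi.trans hcase)) hcase
      -- slope (h i) η < L : from subgradient at η applied to x = h i < η
      have s2 : (φ η - φ (h i)) / (η - h i) < L := by
        have := hL (h i) (hhmem i) (ne_of_lt (hhi.trans hcase))
        rw [div_lt_iff₀ (by linarith : 0 < η - h i)]
        linarith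
      have s3 : (φ (β i) - φ (h i)) / (β i - h i) < L := s1.trans s2
      rw [div_lt_iff₀ (by linarith : 0 < β i - h i)] at s3
      rw [hci]
      linarith
  have hpoint' : ∀ i, φ (c i) + L * (h i - c i) ≤ φ (h i) := by
    intro i
    rcases eq_or_ne (h i) (c i) with heq | hne'
    · rw [heq]; simp
    · exact (hpoint i hne').le
  -- there is a strict index
  obtain ⟨j, hj⟩ : ∃ j, h j ≠ c j := Function.ne_iff.mp hne
  have hsum : ∑ i, w i * (φ (c i) + L * (h i - c i)) < ∑ i, w i * φ (h i) := by
    apply Finset.sum_lt_sum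
    · intro i _
      exact mul_le_mul_of_nonneg_left (hpoint' i) (hw i).le
    · exact ⟨j, Finset.mem_univ j, mul_lt_mul_of_pos_left (hpoint j hj) (hw j)⟩
  have hexpand : ∑ i, w i * (φ (c i) + L * (h i - c i))
      = (∑ i, w i * φ (c i)) + L * ((∑ i, w i * h i) - ∑ i, w i * c i) := by
    simp only [mul_sub, Finset.mul_sum, ← Finset.sum_sub_distrib, ← Finset.sum_add_distrib]
    exact Finset.sum_congr rfl fun i _ => by ring
  have hcB : (∑ i, w i * c i) = B := hηB
  rw [hexpand, hbudget, hcB] at hsum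
  simpa using hsum
end

section
/- Consider two winners with endowments w₁ > w₂ > 0 processed by the queue rule in the order (1, 2) (winner 1 has the strictly higher ranking score), and a budget B with w₁ − w₂ < B ≤ w₁. Then the queue seizes x₁ = B from winner 1 and x₂ = 0 from winner 2, and the post-ADL surviving endowments satisfy w₁ − B < w₂; that is, the queue rule violates monotonicity by reversing the pre-ADL ordering of the two winners (w₁ > w₂ before ADL but survivor of 1 strictly below survivor of 2 after ADL). -/
/-- **Queue monotonicity failure.**
Two winners with endowments `w₁ > w₂ > 0` are processed by the queue in order
`(1, 2)` with budget `w₁ - w₂ < B ≤ w₁`: the queue seizes `x₁ = min w₁ B = B`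
from winner 1 and `x₂ = min w₂ (B - x₁) = 0` from winner 2, and the post-ADL
survivors reverse the pre-ADL ordering: `w₁ - B < w₂`. -/
theorem stmt_7 (w₁ w₂ B : ℝ) (h2pos : 0 < w₂) (h21 : w₂ < w₁)
    (hBlo : w₁ - w₂ < B) (hBhi : B ≤ w₁) :
    min w₁ B = B ∧
    min w₂ (B - min w₁ B) = 0 ∧
    w₁ - min w₁ B < w₂ - min w₂ (B - min w₁ B) := by
  have h1 : min w₁ B = B := min_eq_right hBhi
  rw [h1, sub_self, min_eq_right h2pos.le]
  exact ⟨rfl, rfl, by linarith⟩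
end

section
/- Let n ≥ 1, let w₁,…,wₙ > 0, let caps β₁,…,βₙ ∈ (0,1], let risk weights ŵ₁,…,ŵₙ > 0, and let the budget B satisfy 0 ≤ B ≤ Σᵢ wᵢ·βᵢ. Then the map τ ↦ Σᵢ wᵢ·min(βᵢ, τ·ŵᵢ) is continuous and nondecreasing on [0, maxᵢ (βᵢ/ŵᵢ)], and there exists a calibration parameter τ ≥ 0 such that the risk-aware pro-rata haircuts hᵢ = min(βᵢ, τ·ŵᵢ) satisfy 0 ≤ hᵢ ≤ βᵢ for every i and the budget identity Σᵢ wᵢ·hᵢ = B. Moreover, if τ and τ′ are two nonnegative solutions, then min(βᵢ, τ·ŵᵢ) = min(βᵢ, τ′·ŵᵢ) for every i, so the allocation is unique. -/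
/-- **Risk-aware pro-rata calibration: existence, monotonicity, continuity,
uniqueness.** For endowments `w > 0`, caps `β ∈ (0,1]`, risk weights `ŵ > 0`,
and feasible budget `0 ≤ B ≤ ∑ w i * β i`, the map
`τ ↦ ∑ w i * min (β i) (τ * ŵ i)` is continuous and nondecreasing on
`[0, maxᵢ (βᵢ/ŵᵢ)]`, some `τ ≥ 0` yields haircuts `h i = min (β i) (τ * ŵ i)`
with `0 ≤ h i ≤ β i` meeting the budget identity, and any two nonnegative
solutions induce the same allocation. -/
theorem stmt_16 (n : ℕ) (hn : 0 < n) (w β wh : Fin n → ℝ)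
    (hw : ∀ i, 0 < w i) (hβ : ∀ i, β i ∈ Set.Ioc (0 : ℝ) 1)
    (hwh : ∀ i, 0 < wh i)
    (B : ℝ) (hB0 : 0 ≤ B) (hBC : B ≤ ∑ i, w i * β i) :
    haveI : Nonempty (Fin n) := ⟨⟨0, hn⟩⟩
    ContinuousOn (fun τ : ℝ => ∑ i, w i * min (β i) (τ * wh i))
      (Set.Icc 0 (Finset.univ.sup' Finset.univ_nonempty (fun i => β i / wh i))) ∧
    MonotoneOn (fun τ : ℝ => ∑ i, w i * min (β i) (τ * wh i))
      (Set.Icc 0 (Finset.univ.sup' Finset.univ_nonempty (fun i => β i / wh i))) ∧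
    (∃ τ : ℝ, 0 ≤ τ ∧
      (∀ i, 0 ≤ min (β i) (τ * wh i) ∧ min (β i) (τ * wh i) ≤ β i) ∧
      (∑ i, w i * min (β i) (τ * wh i)) = B) ∧
    (∀ τ τ' : ℝ, 0 ≤ τ → 0 ≤ τ' →
      (∑ i, w i * min (β i) (τ * wh i)) = B →
      (∑ i, w i * min (β i) (τ' * wh i)) = B →
      ∀ i, min (β i) (τ * wh i) = min (β i) (τ' * wh i)) := by
  haveI : Nonempty (Fin n) := ⟨⟨0, hn⟩⟩
  set f : ℝ → ℝ := fun τ => ∑ i, w i * min (β i) (τ * wh i) with hf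
  have hcont : Continuous f := by
    apply continuous_finset_sum
    intro i _
    exact continuous_const.mul ((continuous_const).min ((continuous_id.mul continuous_const)))
  have hmono : Monotone f := by
    intro a b hab
    apply Finset.sum_le_sum
    intro i _
    exact mul_le_mul_of_nonneg_left
      (min_le_min le_rfl (mul_le_mul_of_nonneg_right hab (hwh i).le)) (hw i).le
  set T := Finset.univ.sup' Finset.univ_nonempty (fun i => β i / wh i) with hT
  refine ⟨hcont.continuousOn, hmono.monotoneOn _, ?_, ?_⟩
  · -- existence via IVT on [0, T]
    have hT0 : 0 ≤ T := by
      obtain ⟨i⟩ := (inferInstance : Nonempty (Fin n))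
      rw [hT]
      exact le_trans (div_nonneg (hβ i).1.le (hwh i).le)
        (Finset.le_sup' (fun j => β j / wh j) (Finset.mem_univ i))
    have hf0 : f 0 = 0 := by
      simp only [hf, zero_mul]
      apply Finset.sum_eq_zero
      intro i _
      rw [min_eq_right (hβ i).1.le, mul_zero]
    have hfT : f T = ∑ i, w i * β i := by
      apply Finset.sum_congr rfl
      intro i _
      rw [min_eq_left]
      rw [← div_le_iff₀ (hwh i), hT]
      exact Finset.le_sup' (fun j => β j / wh j) (Finset.mem_univ i)
    have hBmem : B ∈ Set.Icc (f 0) (f T) := by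
      rw [hf0, hfT]; exact ⟨hB0, hBC⟩
    obtain ⟨τ, hτmem, hτeq⟩ := intermediate_value_Icc hT0 hcont.continuousOn hBmem
    refine ⟨τ, hτmem.1, fun i => ⟨?_, min_le_left _ _⟩, hτeq⟩
    exact le_min (hβ i).1.le (mul_nonneg hτmem.1 (hwh i).le)
  · -- uniqueness
    have key : ∀ τ τ' : ℝ, τ ≤ τ' → f τ = B → f τ' = B →
        ∀ i, min (β i) (τ * wh i) = min (β i) (τ' * wh i) := by
      intro τ τ' hle h1 h2 i
      have hle' : ∀ j ∈ Finset.univ, w j * min (β j) (τ * wh j) ≤ w j * min (β j) (τ' * wh j) := by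
        intro j _
        exact mul_le_mul_of_nonneg_left
          (min_le_min le_rfl (mul_le_mul_of_nonneg_right hle (hwh j).le)) (hw j).le
      have := (Finset.sum_eq_sum_iff_of_le hle').mp (h1.trans h2.symm) i (Finset.mem_univ i)
      exact mul_left_cancel₀ (hw i).ne' this
    intro τ τ' _ _ h1 h2 i
    rcases le_total τ τ' with h | h
    · exact key τ τ' h h1 h2 i
    · exact (key τ' τ h h2 h1 i).symm
end
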